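/- Fix an integer p ≥ 1 and a real α > 0. Let F = {(x - a_i)^{e_i} : 1 ≤ i ≤ p} be a family of pairwise distinct shifted powers over ℂ with e_i ≥ αp for all i. Then the dimension of the ℂ-linear span of F is strictly greater than (1 + α - √(α² + 1))·p. In particular (α = 1): if e_i ≥ s for all i in a family of s pairwise distinct complex shifted powers, the span has dimension greater than (2 - √2)·s. -/

import Mathlib

open Polynomial

noncomputable section



def wr {d : ℕ} (v : Fin d → ℂ[X]) : ℂ[X] :=
  (Matrix.of fun i j : Fin d => derivative^[(j : ℕ)] (v i)).det

lemma deriv_dvd {z : ℂ} {m : ℕ} {f : ℂ[X]} (h : (X - C z) ^ m ∣ f) :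
    (X - C z) ^ (m - 1) ∣ derivative f := by
  obtain ⟨g, rfl⟩ := h
  rw [derivative_mul, derivative_pow]
  rcases m with _ | m
  · simp
  · simp only [Nat.add_sub_cancel]
    refine dvd_add ?_ ((pow_dvd_pow _ m.le_succ).mul_right _)
    exact (((dvd_rfl.mul_left ((m+1 : ℕ) : ℂ[X])).mul_right (derivative (X - C z))).mul_right g)

lemma iter_deriv_dvd {z : ℂ} {m : ℕ} {f : ℂ[X]} (h : (X - C z) ^ m ∣ f) (k : ℕ) :
    (X - C z) ^ (m - k) ∣ derivative^[k] f := by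
  induction k generalizing m f with
  | zero => simpa using h
  | succ k ih =>
    rw [Function.iterate_succ_apply]
    have := ih (deriv_dvd h)
    rwa [Nat.sub_sub, Nat.add_comm 1 k] at this

lemma wr_dvd {d : ℕ} (v : Fin d → ℂ[X]) (z : ℂ) (c : Fin d → ℕ)
    (h : ∀ i, (X - C z) ^ (c i) ∣ v i) :
    (X - C z) ^ (∑ i, (c i - (d - 1))) ∣ wr v := by
  rw [wr, Matrix.det_apply]
  refine Finset.dvd_sum fun σ _ => ?_
  have key : (X - C z) ^ (∑ i, (c i - (d - 1))) ∣
      ∏ i, (Matrix.of fun i j : Fin d => derivative^[(j : ℕ)] (v i)) (σ i) i := by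
    have : (∑ i, (c i - (d - 1))) = ∑ i : Fin d, (c (σ i) - (d - 1)) :=
      (Equiv.sum_comp σ fun i => c i - (d-1)).symm
    rw [this, ← Finset.prod_pow_eq_pow_sum]
    refine Finset.prod_dvd_prod_of_dvd _ _ fun i _ => ?_
    refine dvd_trans (pow_dvd_pow _ (Nat.sub_le_sub_left ?_ _)) (iter_deriv_dvd (h (σ i)) i)
    exact Nat.le_sub_one_of_lt i.isLt
  obtain ⟨t, ht⟩ := key
  rw [ht, Units.smul_def, zsmul_eq_mul]
  exact ⟨(Equiv.Perm.sign σ : ℤ) * t, by ring⟩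

lemma iter_deriv_natDegree {f : ℂ[X]} {k : ℕ} (h : derivative^[k] f ≠ 0) :
    natDegree (derivative^[k] f) + k ≤ natDegree f := by
  induction k generalizing f with
  | zero => simp
  | succ k ih =>
    rw [Function.iterate_succ_apply] at h ⊢
    have hd : derivative f ≠ 0 := by
      intro h0; rw [h0] at h; simp [Function.iterate_fixed] at h
    have h1 : natDegree f ≠ 0 := by
      intro h0
      exact hd (derivative_of_natDegree_zero h0)
    have := ih h
    have h2 : natDegree (derivative f) + 1 ≤ natDegree f :=
      Nat.succ_le_of_lt (natDegree_derivative_lt h1)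
    omega

lemma wr_natDegree {d : ℕ} (v : Fin d → ℂ[X]) (h : wr v ≠ 0) :
    natDegree (wr v) + (∑ j : Fin d, (j : ℕ)) ≤ ∑ i, natDegree (v i) := by
  classical
  set D := ∑ j : Fin d, (j : ℕ) with hD
  have key : ∀ σ : Equiv.Perm (Fin d),
      (∏ i, (Matrix.of fun i j : Fin d => derivative^[(j : ℕ)] (v i)) (σ i) i) ≠ 0 →
      natDegree (∏ i, (Matrix.of fun i j : Fin d => derivative^[(j : ℕ)] (v i)) (σ i) i) + D
        ≤ ∑ i, natDegree (v i) := by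
    intro σ hσ
    have h1 : natDegree (∏ i, (Matrix.of fun i j : Fin d => derivative^[(j : ℕ)] (v i)) (σ i) i)
        ≤ ∑ i : Fin d, natDegree (derivative^[(i : ℕ)] (v (σ i))) := natDegree_prod_le _ _
    have h2 : ∀ i : Fin d, natDegree (derivative^[(i : ℕ)] (v (σ i))) + (i : ℕ)
        ≤ natDegree (v (σ i)) := by
      intro i
      refine iter_deriv_natDegree ?_
      intro h0
      refine hσ (Finset.prod_eq_zero (Finset.mem_univ i) ?_)
      simpa using h0
    have h3 : (∑ i : Fin d, natDegree (derivative^[(i : ℕ)] (v (σ i)))) + D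
        ≤ ∑ i : Fin d, natDegree (v (σ i)) := by
      rw [hD, ← Finset.sum_add_distrib]
      exact Finset.sum_le_sum fun i _ => h2 i
    have h4 : ∑ i : Fin d, natDegree (v (σ i)) = ∑ i, natDegree (v i) :=
      Equiv.sum_comp σ fun i => natDegree (v i)
    omega
  -- extract a nonzero term
  have hex : ∃ σ : Equiv.Perm (Fin d),
      (∏ i, (Matrix.of fun i j : Fin d => derivative^[(j : ℕ)] (v i)) (σ i) i) ≠ 0 := by
    by_contra hall
    push_neg at hall
    apply h
    rw [wr, Matrix.det_apply]
    exact Finset.sum_eq_zero fun σ _ => by rw [hall σ, smul_zero]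
  obtain ⟨σ₀, hσ₀⟩ := hex
  have hDle : D ≤ ∑ i, natDegree (v i) := le_trans (Nat.le_add_left _ _) (key σ₀ hσ₀)
  have hbound : natDegree (wr v) ≤ (∑ i, natDegree (v i)) - D := by
    rw [wr, Matrix.det_apply]
    refine natDegree_sum_le_of_forall_le _ _ fun σ _ => ?_
    rcases eq_or_ne (∏ i, (Matrix.of fun i j : Fin d => derivative^[(j : ℕ)] (v i)) (σ i) i) 0
      with h0 | h0
    · rw [h0, smul_zero]; simp
    · have := key σ h0
      have hsmul : natDegree (Equiv.Perm.sign σ •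
          ∏ i, (Matrix.of fun i j : Fin d => derivative^[(j : ℕ)] (v i)) (σ i) i) =
          natDegree (∏ i, (Matrix.of fun i j : Fin d => derivative^[(j : ℕ)] (v i)) (σ i) i) := by
        rcases Int.units_eq_one_or (Equiv.Perm.sign σ) with hs | hs <;>
          simp [hs, Units.smul_def]
      omega
  omega

lemma iter_deriv_sum_smul {d : ℕ} (v : Fin d → ℂ[X]) (c : Fin d → ℂ) (k : ℕ) :
    derivative^[k] (∑ j, c j • v j) = ∑ j, c j • derivative^[k] (v j) := by
  induction k with
  | zero => simp
  | succ k ih =>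
    rw [Function.iterate_succ_apply', ih, derivative_sum]
    refine Finset.sum_congr rfl fun j _ => ?_
    rw [derivative_smul, Function.iterate_succ_apply']

lemma wr_basechange {d : ℕ} (v w : Fin d → ℂ[X]) (M : Matrix (Fin d) (Fin d) ℂ)
    (h : ∀ i, w i = ∑ j, M i j • v j) :
    wr w = C M.det * wr v := by
  have hm : (Matrix.of fun i j : Fin d => derivative^[(j : ℕ)] (w i)) =
      (M.map C) * (Matrix.of fun i j : Fin d => derivative^[(j : ℕ)] (v i)) := by
    ext i k
    rw [Matrix.mul_apply]
    simp only [Matrix.of_apply, Matrix.map_apply]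
    rw [h i, iter_deriv_sum_smul]
    simp [smul_eq_C_mul]
  rw [wr, wr, hm, Matrix.det_mul]
  congr 1
  have := (C : ℂ →+* ℂ[X]).map_det M
  rw [this]
  rfl

lemma iter_deriv_add (p q : ℂ[X]) (k : ℕ) :
    derivative^[k] (p + q) = derivative^[k] p + derivative^[k] q := by
  induction k generalizing p q with
  | zero => simp
  | succ k ih =>
    rw [Function.iterate_succ_apply, derivative_add, ih]
    simp [Function.iterate_succ_apply]

lemma iter_deriv_linfactor (z : ℂ) (q : ℂ[X]) (k : ℕ) :
    derivative^[k+1] ((X - C z) * q) =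
      (X - C z) * derivative^[k+1] q + ((k : ℂ[X]) + 1) * derivative^[k] q := by
  induction k generalizing q with
  | zero => simp [derivative_mul]; ring
  | succ k ih =>
    rw [Function.iterate_succ_apply, show derivative ((X - C z) * q)
      = (X - C z) * derivative q + q by rw [derivative_mul]; simp [mul_comm]; ring]
    rw [iter_deriv_add]
    rw [ih (derivative q)]
    rw [← Function.iterate_succ_apply, ← Function.iterate_succ_apply]
    push_cast
    ring

lemma vanish_dvd (z : ℂ) : ∀ (m : ℕ) (h : ℂ[X]),
    (∀ j, j < m → eval z (derivative^[j] h) = 0) → (X - C z) ^ m ∣ h := by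
  intro m
  induction m with
  | zero => intro h _; simp
  | succ m ih =>
    intro h hvan
    have h0 : eval z h = 0 := by simpa using hvan 0 m.succ_pos
    obtain ⟨q, rfl⟩ := (dvd_iff_isRoot.mpr h0 : (X - C z) ∣ h)
    have hq : ∀ j, j < m → eval z (derivative^[j] q) = 0 := by
      intro j hj
      have := hvan (j+1) (by omega)
      rw [iter_deriv_linfactor] at this
      simp only [eval_add, eval_mul, eval_sub, eval_X, eval_C, sub_self, zero_mul, zero_add,
        eval_one, eval_natCast] at this
      rcases mul_eq_zero.mp this with h1 | h1
      · exact absurd h1 (Nat.cast_add_one_ne_zero j)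
      · exact h1
    rw [pow_succ, mul_comm ((X - C z)^m)]
    exact mul_dvd_mul_left _ (ih q hq)

lemma ode_contradiction {m : ℕ} (c : Fin (m+1) → ℂ[X]) (z : ℂ)
    (hlast : eval z (c (Fin.last m)) ≠ 0) (h : ℂ[X]) (hh : h ≠ 0)
    (heq : ∑ j, c j * derivative^[(j : ℕ)] h = 0)
    (hvan : ∀ j, j < m → eval z (derivative^[j] h) = 0) : False := by
  set k := rootMultiplicity z h with hk
  have hmk : m ≤ k := (le_rootMultiplicity_iff hh).mpr (vanish_dvd z m h hvan)
  obtain ⟨g, hg⟩ := pow_rootMultiplicity_dvd h z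
  have hgz : eval z g ≠ 0 := by
    intro h0
    obtain ⟨g', rfl⟩ := dvd_iff_isRoot.mpr h0
    have : (X - C z) ^ (k + 1) ∣ h := ⟨g', by rw [hg]; ring⟩
    have := (le_rootMultiplicity_iff hh).mp (le_refl k)
    have hle := (le_rootMultiplicity_iff hh).mpr ‹(X - C z) ^ (k+1) ∣ h›
    omega
  have key : ∀ j, j ≤ m → ∃ gj : ℂ[X], derivative^[j] h = (X - C z) ^ (k - j) * gj ∧
      eval z gj ≠ 0 := by
    intro j
    induction j with
    | zero => intro _; exact ⟨g, by simpa using hg, hgz⟩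
    | succ j ih =>
      intro hjm
      obtain ⟨gj, hgj, hgjz⟩ := ih (by omega)
      have hkj : k - j = (k - (j+1)) + 1 := by omega
      rw [hkj] at hgj
      refine ⟨(((k - (j+1) : ℕ) : ℂ[X]) + 1) * gj + (X - C z) * derivative gj, ?_, ?_⟩
      · rw [Function.iterate_succ_apply', hgj, derivative_mul, derivative_pow]
        simp only [Nat.add_sub_cancel, derivative_sub, derivative_X, derivative_C, sub_zero,
          mul_one, map_add, map_one, map_natCast]
        push_cast
        ring
      · simp only [eval_add, eval_mul, eval_sub, eval_X, eval_C, sub_self, zero_mul, add_zero]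
        intro h0
        rw [mul_eq_zero] at h0
        rcases h0 with h0 | h0
        · have : ((k - (j+1) : ℕ) : ℂ) + 1 = 0 := by simpa using h0
          exact Nat.cast_add_one_ne_zero _ this
        · exact hgjz h0
  obtain ⟨gm, hgm, hgmz⟩ := key m (le_refl m)
  have hsplit : c (Fin.last m) * derivative^[m] h
      = - ∑ j : Fin m, c j.castSucc * derivative^[(j : ℕ)] h := by
    have := Fin.sum_univ_castSucc (fun j : Fin (m+1) => c j * derivative^[(j : ℕ)] h)
    rw [heq] at this
    simp only [Fin.coe_castSucc, Fin.val_last] at this ⊢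
    linear_combination -this
  have hdvd : (X - C z) ^ (k - m + 1) ∣ c (Fin.last m) * derivative^[m] h := by
    rw [hsplit]
    refine dvd_neg.mpr (Finset.dvd_sum fun j _ => ?_)
    obtain ⟨gj, hgj, _⟩ := key (j : ℕ) (by omega)
    rw [hgj]
    refine Dvd.dvd.mul_left (Dvd.dvd.mul_right (pow_dvd_pow _ ?_) _) _
    have : (j : ℕ) < m := j.isLt
    omega
  rw [hgm, pow_add, pow_one] at hdvd
  have hne : ((X - C z) ^ (k - m) : ℂ[X]) ≠ 0 := pow_ne_zero _ (X_sub_C_ne_zero z)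
  have : (X - C z) ∣ c (Fin.last m) * gm := by
    have h2 : (X - C z) ^ (k-m) * (X - C z) ∣ (X - C z)^(k-m) * (c (Fin.last m) * gm) := by
      have := hdvd
      rwa [show c (Fin.last m) * ((X - C z) ^ (k - m) * gm)
        = (X - C z)^(k-m) * (c (Fin.last m) * gm) by ring] at this
    exact (mul_dvd_mul_iff_left hne).mp h2
  have := dvd_iff_isRoot.mp this
  simp only [IsRoot, eval_mul] at this
  rcases mul_eq_zero.mp this with h0 | h0
  · exact hlast h0
  · exact hgmz h0

def wrMinor {m : ℕ} (v' : Fin m → ℂ[X]) (j : Fin (m+1)) : ℂ[X] :=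
  (Matrix.of fun i k : Fin m => derivative^[((j.succAbove k : Fin (m+1)) : ℕ)] (v' i)).det

lemma wr_snoc {m : ℕ} (v' : Fin m → ℂ[X]) (h : ℂ[X]) :
    wr (Fin.snoc v' h : Fin (m+1) → ℂ[X]) =
      ∑ j : Fin (m+1), ((-1 : ℂ[X]) ^ (m + (j : ℕ)) * wrMinor v' j) * derivative^[(j : ℕ)] h := by
  rw [wr, Matrix.det_succ_row _ (Fin.last m)]
  refine Finset.sum_congr rfl fun j _ => ?_
  have h1 : (Matrix.of fun i j : Fin (m+1) => derivative^[(j : ℕ)] ((Fin.snoc v' h : Fin (m+1) → ℂ[X]) i))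
      (Fin.last m) j = derivative^[(j : ℕ)] h := by
    simp [Fin.snoc_last]
  have h2 : ((Matrix.of fun i j : Fin (m+1) => derivative^[(j : ℕ)] ((Fin.snoc v' h : Fin (m+1) → ℂ[X]) i)).submatrix
      (Fin.last m).succAbove j.succAbove) = Matrix.of fun i k : Fin m =>
        derivative^[((j.succAbove k : Fin (m+1)) : ℕ)] (v' i) := by
    ext i k
    simp [Fin.succAbove_last, Fin.snoc_castSucc]
  rw [h1, h2, Fin.val_last, wrMinor]
  ring

lemma wrMinor_last {m : ℕ} (v' : Fin m → ℂ[X]) : wrMinor v' (Fin.last m) = wr v' := by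
  rw [wrMinor, wr]
  congr 1
  ext i k
  simp [Fin.succAbove_last]

lemma wr_ne_zero : ∀ {d : ℕ} (v : Fin d → ℂ[X]), LinearIndependent ℂ v → wr v ≠ 0 := by
  intro d
  induction d with
  | zero => intro v _; rw [wr, Matrix.det_isEmpty]; exact one_ne_zero
  | succ m ih =>
    intro v hv h0
    set v' : Fin m → ℂ[X] := v ∘ Fin.castSucc with hv'def
    have hv' : LinearIndependent ℂ v' := hv.comp _ (Fin.castSucc_injective m)
    have hW' : wr v' ≠ 0 := ih v' hv'
    set cc : Fin (m+1) → ℂ[X] := fun j => (-1 : ℂ[X]) ^ (m + (j : ℕ)) * wrMinor v' j with hcc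
    have hclast : cc (Fin.last m) = wr v' := by
      rw [hcc]
      simp only [Fin.val_last, wrMinor_last]
      rw [show m + m = 2 * m by ring, pow_mul]
      simp
    -- each v i is killed
    have hker : ∀ i : Fin (m+1), ∑ j, cc j * derivative^[(j : ℕ)] (v i) = 0 := by
      intro i
      have hrw : ∑ j, cc j * derivative^[(j : ℕ)] (v i) = wr (Fin.snoc v' (v i) : Fin (m+1) → ℂ[X]) :=
        (wr_snoc v' (v i)).symm
      rw [hrw]
      induction i using Fin.lastCases with
      | last =>
        have hvv : (Fin.snoc v' (v (Fin.last m)) : Fin (m+1) → ℂ[X]) = v := by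
          refine funext fun r => ?_
          induction r using Fin.lastCases with
          | last => simp
          | cast r' => simp [hv'def, Fin.snoc_castSucc]
        rw [hvv]
        exact h0
      | cast i' =>
        refine Matrix.det_zero_of_row_eq (i := Fin.castSucc i') (j := Fin.last m)
          (Fin.ne_of_lt (Fin.castSucc_lt_last i')) ?_
        refine funext fun k => ?_
        simp [Fin.snoc_castSucc, Fin.snoc_last, hv'def]
    -- pick a good evaluation point
    have hex : ∃ z : ℂ, eval z (wr v') ≠ 0 := by
      by_contra hall
      push_neg at hall
      exact hW' (zero_of_eval_zero _ hall)
    obtain ⟨z, hz⟩ := hex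
    -- the vectors of derivative evaluations
    set u : Fin (m+1) → (Fin m → ℂ) := fun i j => eval z (derivative^[(j : ℕ)] (v i)) with hu
    have hnli : ¬ LinearIndependent ℂ u := by
      intro hli
      have := hli.fintype_card_le_finrank
      simp [Module.finrank_pi] at this
    obtain ⟨g, hg0, i₀, hgi₀⟩ := Fintype.not_linearIndependent_iff.mp hnli
    set hpoly : ℂ[X] := ∑ i, g i • v i with hhp
    have hhne : hpoly ≠ 0 := by
      intro hzero
      exact hgi₀ (Fintype.linearIndependent_iff.mp hv g hzero i₀)
    have heq : ∑ j, cc j * derivative^[(j : ℕ)] hpoly = 0 := by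
      have expand : ∀ j : Fin (m+1), cc j * derivative^[(j : ℕ)] hpoly
          = ∑ i, g i • (cc j * derivative^[(j : ℕ)] (v i)) := by
        intro j
        rw [hhp, iter_deriv_sum_smul, Finset.mul_sum]
        exact Finset.sum_congr rfl fun i _ => (mul_smul_comm (g i) (cc j) _)
      rw [Finset.sum_congr rfl fun j _ => expand j, Finset.sum_comm]
      refine Finset.sum_eq_zero fun i _ => ?_
      rw [← Finset.smul_sum, hker i, smul_zero]
    have hvan : ∀ j, j < m → eval z (derivative^[j] hpoly) = 0 := by
      intro j hj
      have := congrFun hg0 ⟨j, hj⟩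
      simp only [Finset.sum_apply, Pi.smul_apply, smul_eq_mul, Pi.zero_apply, hu] at this
      rw [hhp, iter_deriv_sum_smul, eval_finset_sum]
      simpa [smul_eq_C_mul] using this
    exact ode_contradiction cc z (by rw [hclast]; exact hz) hpoly hhne heq hvan


lemma li_pow_shift (z : ℂ) {ι : Type*} (n : ι → ℕ) (hn : Function.Injective n) :
    LinearIndependent ℂ fun i => (X - C z) ^ (n i) := by
  have h1 : LinearIndependent ℂ fun i => (X : ℂ[X]) ^ (n i) := by
    rw [linearIndependent_iff']
    intro s g hg i hi
    have hco := congrArg (fun q : ℂ[X] => coeff q (n i)) hg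
    simp only [finset_sum_coeff, coeff_smul, coeff_X_pow, smul_eq_mul, coeff_zero] at hco
    rw [Finset.sum_eq_single i] at hco
    · simpa using hco
    · intro b _ hbne
      rw [if_neg (fun hc => hbne (hn hc.symm)), mul_zero]
    · intro hni; exact absurd hi hni
  have h2 : (fun i => (X - C z) ^ (n i))
      = (taylor (-z)) ∘ fun i => (X : ℂ[X]) ^ (n i) := by
    funext i
    simp only [Function.comp_apply, taylor_apply, pow_comp, X_comp, map_neg, sub_eq_add_neg]
  rw [h2]
  exact h1.map' (taylor (-z)) (LinearMap.ker_eq_bot.mpr (taylor_injective _))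



lemma final_ineq (α s pr nr : ℝ) (hα : 0 < α) (hs : s^2 = α^2+1) (hs1 : 1 ≤ s)
    (hp1 : 1 ≤ pr) (hn1 : 1 ≤ nr) (hnp : nr ≤ pr)
    (hmain : (pr - nr)*(α*pr) ≤ pr*(nr-1) - nr*(nr-1)/2) :
    (1+α-s)*pr < nr := by
  by_contra hcon
  push_neg at hcon
  -- hcon : nr ≤ (1+α-s)*pr
  have hsα : α < s := by nlinarith [sq_nonneg (s - α)]
  have hc1 : 1 + α - s < 1 := by linarith
  have key : ((1+α-s)*pr - nr) * (α*pr + pr + 1/2 - (nr + (1+α-s)*pr)/2) ≥ 0 := by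
    apply mul_nonneg (by linarith)
    nlinarith
  have hF : (pr - nr)*(α*pr) - pr*(nr-1) + nr*(nr-1)/2
      = pr^2*(s^2 - α^2 - 1)/2 + pr*(1 - (1+α-s)/2)
        + ((1+α-s)*pr - nr) * (α*pr + pr + 1/2 - (nr + (1+α-s)*pr)/2) := by ring
  have hz : s^2 - α^2 - 1 = 0 := by linarith
  have hpos : 0 < pr*(1 - (1+α-s)/2) := by nlinarith
  rw [hz] at hF
  nlinarith [key, hmain, hF, hpos]


lemma enum_set (B : Set ℂ[X]) [Fintype B]
    (hBli : LinearIndependent ℂ ((↑) : B → ℂ[X])) :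
    ∃ β : Fin B.toFinset.card → ℂ[X],
      Set.range β = B ∧ Function.Injective β ∧ LinearIndependent ℂ β := by
  classical
  let eqv := B.toFinset.equivFin
  refine ⟨fun j => ((eqv.symm j : ↥B.toFinset) : ℂ[X]), ?_, ?_, ?_⟩
  · have h1 : Set.range (fun j => ((eqv.symm j : ↥B.toFinset) : ℂ[X]))
        = Subtype.val '' (Set.range eqv.symm) := by
      rw [← Set.range_comp]; rfl
    rw [h1, Equiv.range_eq_univ, Set.image_univ, Subtype.range_coe_subtype,
      Finset.setOf_mem, Set.coe_toFinset]
  · exact Subtype.val_injective.comp eqv.symm.injective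
  · have hinj : Function.Injective (fun j => ((eqv.symm j : ↥B.toFinset) : ℂ[X])) :=
      Subtype.val_injective.comp eqv.symm.injective
    rw [← linearIndepOn_id_range_iff hinj]
    have h1 : Set.range (fun j => ((eqv.symm j : ↥B.toFinset) : ℂ[X])) = B := by
      have h1 : Set.range (fun j => ((eqv.symm j : ↥B.toFinset) : ℂ[X]))
          = Subtype.val '' (Set.range eqv.symm) := by
        rw [← Set.range_comp]; rfl
      rw [h1, Equiv.range_eq_univ, Set.image_univ, Subtype.range_coe_subtype,
        Finset.setOf_mem, Set.coe_toFinset]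
    rw [h1]
    exact hBli

theorem stmt19 (p : ℕ) (hp : 1 ≤ p) (α : ℝ) (hα : 0 < α)
    (a : Fin p → ℂ) (e : Fin p → ℕ)
    (hdist : Function.Injective (fun i => (a i, e i)))
    (hbig : ∀ i, α * p ≤ (e i : ℝ)) :
    (1 + α - Real.sqrt (α ^ 2 + 1)) * p <
      (Module.finrank ℂ
        (Submodule.span ℂ (Set.range fun i => (X - C (a i)) ^ (e i))) : ℝ) := by
  classical
  set f : Fin p → ℂ[X] := fun i => (X - C (a i)) ^ (e i) with hf
  have hp0 : (0:ℝ) < p := by exact_mod_cast hp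
  have hepos : ∀ i, 1 ≤ e i := by
    intro i
    by_contra h
    have h0 : e i = 0 := by omega
    have hb := hbig i
    rw [h0] at hb
    have : (0:ℝ) < α * p := mul_pos hα hp0
    simp at hb
    linarith
  have hfne : ∀ i, f i ≠ 0 := fun i => pow_ne_zero _ (X_sub_C_ne_zero _)
  have hfinj : Function.Injective f := by
    intro i j hij
    have hdeg : e i = e j := by
      have := congrArg natDegree hij
      simpa [hf, natDegree_pow, natDegree_X_sub_C] using this
    have haij : a i = a j := by
      have heval := congrArg (eval (a i)) hij
      simp only [hf, eval_pow, eval_sub, eval_X, eval_C, sub_self] at heval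
      have heine : e i ≠ 0 := by have := hepos i; omega
      have hejne : e j ≠ 0 := by have := hepos j; omega
      rw [zero_pow heine] at heval
      have h9 := (pow_eq_zero_iff hejne).mp heval.symm
      have := sub_eq_zero.mp h9
      exact this
    exact hdist (by simp [haij, hdeg] : (fun i => (a i, e i)) i = (fun i => (a i, e i)) j)
  obtain ⟨B, hBsub, hBspan, hBli⟩ := exists_linearIndependent ℂ (Set.range f)
  have hBfin : B.Finite := (Set.finite_range f).subset hBsub
  haveI : Fintype B := hBfin.fintype
  set n := B.toFinset.card with hn
  have hfinrank : Module.finrank ℂ (Submodule.span ℂ (Set.range f)) = n := by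
    rw [← hBspan]; exact finrank_span_set_eq_card hBli
  obtain ⟨β, hβrange, hβinj, hβli⟩ := enum_set B hBli
  have hW : wr β ≠ 0 := wr_ne_zero β hβli
  -- n ≥ 1
  have hn1 : 1 ≤ n := by
    by_contra hcon
    have hB0 : B = ∅ := by
      have : B.toFinset.card = 0 := by omega
      have := Finset.card_eq_zero.mp this
      rw [← Set.coe_toFinset B, this]; simp
    have hbot : Submodule.span ℂ B = ⊥ := by rw [hB0]; exact Submodule.span_empty
    have hmem : f ⟨0, by omega⟩ ∈ (⊥ : Submodule ℂ ℂ[X]) := by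
      rw [← hbot, hBspan]; exact Submodule.subset_span ⟨⟨0, by omega⟩, rfl⟩
    exact hfne _ ((Submodule.mem_bot ℂ).mp hmem)
  -- τ : basis elements are values of f
  have hβmem : ∀ j : Fin n, ∃ i : Fin p, f i = β j := by
    intro j
    have : β j ∈ B := by rw [← hβrange]; exact ⟨j, rfl⟩
    exact hBsub this
  choose τ hτ using hβmem
  have hτinj : Function.Injective τ := by
    intro i j h
    apply hβinj
    rw [← hτ i, ← hτ j, h]
  have hτdeg : ∀ j : Fin n, natDegree (β j) = e (τ j) := by
    intro j
    rw [← hτ j, hf]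
    simp [natDegree_pow, natDegree_X_sub_C]
  -- per-shift valuation bound
  set Z := Finset.image a Finset.univ with hZ
  have hperz : ∀ z ∈ Z,
      (∑ i ∈ Finset.univ.filter (fun i => a i = z), (e i - (n-1)))
        ≤ rootMultiplicity z (wr β) := by
    intro z _
    set S := Finset.univ.filter (fun i => a i = z) with hS
    have hmemS : ∀ i : Fin p, i ∈ S → a i = z := by
      intro i hi
      exact (Finset.mem_filter.mp hi).2
    -- independence of the same-shift family
    have hinj_e : Function.Injective (fun i : ↥(↑S : Set (Fin p)) => e i.1) := by
      intro i j hij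
      have hai : a i.1 = z := hmemS i.1 (by exact_mod_cast i.2)
      have haj : a j.1 = z := hmemS j.1 (by exact_mod_cast j.2)
      have : (fun i => (a i, e i)) i.1 = (fun i => (a i, e i)) j.1 := by
        simp [hai, haj, hij]
      exact Subtype.ext (hdist this)
    have hli0 : LinearIndependent ℂ (fun i : ↥(↑S : Set (Fin p)) => (X - C z) ^ (e i.1)) :=
      li_pow_shift z _ hinj_e
    have hli1 : (fun i : ↥(↑S : Set (Fin p)) => f i.1)
        = (fun i : ↥(↑S : Set (Fin p)) => (X - C z) ^ (e i.1)) := by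
      funext i
      have haz : a i.1 = z := hmemS i.1 (by exact_mod_cast i.2)
      simp only [hf, haz]
    have hli2 : LinearIndependent ℂ ((↑) : ↥(f '' (↑S : Set (Fin p))) → ℂ[X]) := by
      have h3 : LinearIndependent ℂ (fun i : ↥(↑S : Set (Fin p)) => f i.1) := by
        rw [hli1]; exact hli0
      have h4 := (linearIndepOn_id_range_iff h3.injective).mpr h3
      rwa [← Set.image_eq_range] at h4
    have hsubset : f '' (↑S : Set (Fin p)) ⊆ Set.range f := by
      rintro x ⟨i, _, rfl⟩; exact ⟨i, rfl⟩
    obtain ⟨Bz, hBz_sub, hBz_sup, hBz_span, hBzli⟩ :=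
      exists_linearIndepOn_id_extension hli2 hsubset
    have hBzfin : Bz.Finite := (Set.finite_range f).subset hBz_sub
    haveI : Fintype Bz := hBzfin.fintype
    have hspan_eq : Submodule.span ℂ Bz = Submodule.span ℂ (Set.range f) :=
      le_antisymm (Submodule.span_mono hBz_sub) (Submodule.span_le.mpr hBz_span)
    have hcardz : Bz.toFinset.card = n := by
      have h5 := finrank_span_set_eq_card hBzli
      rw [hspan_eq, hfinrank] at h5
      omega
    obtain ⟨βz0, hβz0range, hβz0inj, hβz0li⟩ := enum_set Bz hBzli
    set βz : Fin n → ℂ[X] := βz0 ∘ (Fin.cast hcardz.symm) with hβz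
    have hsurj : Function.Surjective (Fin.cast hcardz.symm : Fin n → Fin Bz.toFinset.card) :=
      fun x => ⟨Fin.cast hcardz x, rfl⟩
    have hβzrange : Set.range βz = Bz := by
      rw [hβz, Set.range_comp, Set.range_eq_univ.mpr hsurj, Set.image_univ, hβz0range]
    have hβzinj : Function.Injective βz :=
      hβz0inj.comp (Fin.cast_injective _)
    have hβzli : LinearIndependent ℂ βz :=
      hβz0li.comp _ (Fin.cast_injective _)
    -- base change
    have hmemspan : ∀ i, βz i ∈ Submodule.span ℂ (Set.range β) := by
      intro i
      rw [hβrange, hBspan, ← hspan_eq]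
      exact Submodule.subset_span (by rw [← hβzrange]; exact ⟨i, rfl⟩)
    have hexist : ∀ i, ∃ c : Fin n → ℂ, ∑ j, c j • β j = βz i := by
      intro i
      exact (Submodule.mem_span_range_iff_exists_fun ℂ).mp (hmemspan i)
    choose M hM using hexist
    have hbc : wr βz = C ((Matrix.of M).det) * wr β :=
      wr_basechange β βz (Matrix.of M) (fun i => (hM i).symm)
    have hWz : wr βz ≠ 0 := wr_ne_zero βz hβzli
    have hdvd0 : (X - C z) ^ (∑ j, (rootMultiplicity z (βz j) - (n-1))) ∣ wr βz :=
      wr_dvd βz z _ (fun j => pow_rootMultiplicity_dvd _ z)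
    have hdetne : ((Matrix.of M).det : ℂ) ≠ 0 := by
      intro h0
      rw [h0, map_zero, zero_mul] at hbc
      exact hWz hbc
    have hdvdW : (X - C z) ^ (∑ j, (rootMultiplicity z (βz j) - (n-1))) ∣ wr β := by
      rw [hbc] at hdvd0
      obtain ⟨u, hu⟩ := (isUnit_C.mpr hdetne.isUnit)
      rw [← hu] at hdvd0
      exact (Units.dvd_mul_left).mp hdvd0
    have hle := (le_rootMultiplicity_iff hW).mpr hdvdW
    refine le_trans ?_ hle
    -- lower bound the sum
    have hfmem : ∀ i ∈ S, ∃ j : Fin n, βz j = f i := by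
      intro i hi
      have h6 : f i ∈ Bz := hBz_sup ⟨i, by exact_mod_cast hi, rfl⟩
      rw [← hβzrange] at h6
      exact h6
    choose ψ hψ using hfmem
    have calc1 : ∑ i ∈ S, (e i - (n-1))
        = ∑ i ∈ S.attach, (rootMultiplicity z (βz (ψ i.1 i.2)) - (n-1)) := by
      rw [← Finset.sum_attach S (fun i => (e i - (n-1)))]
      refine Finset.sum_congr rfl fun i _ => ?_
      rw [hψ i.1 i.2]
      simp only [hf]
      rw [hmemS i.1 i.2, rootMultiplicity_X_sub_C_pow]
    rw [calc1]
    have hψinj : ∀ x ∈ S.attach, ∀ y ∈ S.attach,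
        (fun i : {x // x ∈ S} => ψ i.1 i.2) x = (fun i : {x // x ∈ S} => ψ i.1 i.2) y
          → x = y := by
      intro x _ y _ hxy
      have : f x.1 = f y.1 := by
        rw [← hψ x.1 x.2, ← hψ y.1 y.2]
        simpa using congrArg βz hxy
      exact Subtype.ext (hfinj this)
    calc ∑ i ∈ S.attach, (rootMultiplicity z (βz (ψ i.1 i.2)) - (n-1))
        = ∑ j ∈ S.attach.image (fun i : {x // x ∈ S} => ψ i.1 i.2),
            (rootMultiplicity z (βz j) - (n-1)) :=
          (Finset.sum_image (f := fun j => rootMultiplicity z (βz j) - (n-1)) hψinj).symm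
      _ ≤ ∑ j : Fin n, (rootMultiplicity z (βz j) - (n-1)) :=
          Finset.sum_le_sum_of_subset (Finset.subset_univ _)
  -- sum the valuations over all shifts
  have hsum1 : ∑ i : Fin p, (e i - (n-1))
      = ∑ z ∈ Z, ∑ i ∈ Finset.univ.filter (fun i => a i = z), (e i - (n-1)) :=
    (Finset.sum_fiberwise_of_maps_to (fun i _ => Finset.mem_image_of_mem a (Finset.mem_univ i))
      _).symm
  have hsum2 : ∑ z ∈ Z, rootMultiplicity z (wr β) ≤ natDegree (wr β) := by
    have hcount : ∀ z, rootMultiplicity z (wr β) = (wr β).roots.count z :=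
      fun z => (count_roots _).symm
    calc ∑ z ∈ Z, rootMultiplicity z (wr β) = ∑ z ∈ Z, (wr β).roots.count z := by
          exact Finset.sum_congr rfl fun z _ => hcount z
      _ = ∑ z ∈ Z.filter (fun z => z ∈ (wr β).roots.toFinset), (wr β).roots.count z := by
          refine (Finset.sum_filter_of_ne fun z _ hne => ?_).symm
          by_contra hmem
          exact hne (by
            rw [Multiset.count_eq_zero]
            intro hmem2
            exact hmem (Multiset.mem_toFinset.mpr hmem2))
      _ ≤ ∑ z ∈ (wr β).roots.toFinset, (wr β).roots.count z :=
          Finset.sum_le_sum_of_subset (fun z hz => (Finset.mem_filter.mp hz).2)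
      _ = Multiset.card (wr β).roots := Multiset.toFinset_sum_count_eq _
      _ ≤ natDegree (wr β) := card_roots' _
  have hdeg : natDegree (wr β) + (∑ j : Fin n, (j:ℕ)) ≤ ∑ j : Fin n, natDegree (β j) :=
    wr_natDegree β hW
  -- the master ℕ inequality
  have hchain : ∑ i : Fin p, (e i - (n-1)) + ∑ j : Fin n, (j:ℕ)
      ≤ ∑ j : Fin n, e (τ j) := by
    have h7 : ∑ i : Fin p, (e i - (n-1)) ≤ natDegree (wr β) := by
      rw [hsum1]
      exact le_trans (Finset.sum_le_sum hperz) hsum2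
    have h8 : ∑ j : Fin n, natDegree (β j) = ∑ j : Fin n, e (τ j) :=
      Finset.sum_congr rfl fun j _ => hτdeg j
    omega
  -- move to the real numbers
  set T := Finset.image τ Finset.univ with hT
  have hnp : n ≤ p := by simpa using Fintype.card_le_of_injective τ hτinj
  have hTsum : ∑ j : Fin n, e (τ j) = ∑ i ∈ T, e i :=
    (Finset.sum_image (fun x _ y _ h => hτinj h)).symm
  have hTcard : T.card = n := by
    rw [hT, Finset.card_image_of_injective _ hτinj, Finset.card_univ, Fintype.card_fin]
  have hD2 : (∑ j : Fin n, (j:ℕ)) * 2 = n * (n-1) := by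
    rw [Fin.sum_univ_eq_sum_range (fun j => j) n]
    exact Finset.sum_range_id_mul_two n
  have hDR : ((∑ j : Fin n, (j:ℕ)):ℝ) = (n:ℝ)*((n:ℝ)-1)/2 := by
    have h2R : ((∑ j : Fin n, (j:ℕ)):ℝ) * 2 = ((n * (n-1) : ℕ):ℝ) := by exact_mod_cast hD2
    have h9 : ((n*(n-1):ℕ):ℝ) = (n:ℝ)*((n:ℝ)-1) := by
      rw [Nat.cast_mul, Nat.cast_sub hn1, Nat.cast_one]
    linarith
  have hcast1 : ∀ i : Fin p, (e i:ℝ) - ((n:ℝ) - 1) ≤ ((e i - (n-1) : ℕ) : ℝ) := by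
    intro i
    have hcn : ((n-1:ℕ):ℝ) = (n:ℝ)-1 := by rw [Nat.cast_sub hn1, Nat.cast_one]
    rcases le_total (n-1) (e i) with h | h
    · rw [Nat.cast_sub h, hcn]
    · have h4 : e i - (n-1) = 0 := Nat.sub_eq_zero_of_le h
      rw [h4, Nat.cast_zero]
      have h5 : (e i:ℝ) ≤ ((n-1:ℕ):ℝ) := by exact_mod_cast h
      rw [hcn] at h5
      linarith
  have hsumlow : ∑ i : Fin p, ((e i:ℝ) - ((n:ℝ)-1)) ≤ ((∑ i : Fin p, (e i - (n-1)) : ℕ) : ℝ) := by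
    rw [Nat.cast_sum]
    exact Finset.sum_le_sum (fun i _ => hcast1 i)
  have hchainR : ((∑ i : Fin p, (e i - (n-1)) : ℕ):ℝ) + ((∑ j : Fin n, (j:ℕ)):ℝ)
      ≤ ∑ i ∈ T, (e i:ℝ) := by
    have h6 : ((∑ j : Fin n, e (τ j) : ℕ):ℝ) = ∑ i ∈ T, (e i:ℝ) := by
      rw [hTsum, Nat.cast_sum]
    rw [← h6]
    exact_mod_cast hchain
  have hsplit : ∑ i ∈ Finset.univ \ T, (e i:ℝ) + ∑ i ∈ T, (e i:ℝ) = ∑ i : Fin p, (e i:ℝ) :=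
    Finset.sum_sdiff (Finset.subset_univ T)
  have hconst : ∑ i : Fin p, ((e i:ℝ) - ((n:ℝ)-1)) = (∑ i : Fin p, (e i:ℝ)) - p*((n:ℝ)-1) := by
    rw [Finset.sum_sub_distrib, Finset.sum_const, Finset.card_univ, Fintype.card_fin,
      nsmul_eq_mul]
  have hlowE : (α * p) * ((p:ℝ) - n) ≤ ∑ i ∈ Finset.univ \ T, (e i:ℝ) := by
    have hcard : (Finset.univ \ T).card = p - n := by
      rw [Finset.card_sdiff_of_subset (Finset.subset_univ T), Finset.card_univ, Fintype.card_fin, hTcard]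
    have h7 : ∑ _i ∈ Finset.univ \ T, (α * p) ≤ ∑ i ∈ Finset.univ \ T, (e i:ℝ) :=
      Finset.sum_le_sum (fun i _ => hbig i)
    rw [Finset.sum_const, hcard, nsmul_eq_mul] at h7
    have h8 : ((p - n : ℕ):ℝ) = (p:ℝ) - n := by rw [Nat.cast_sub hnp]
    rw [h8] at h7
    linarith
  have hmain : ((p:ℝ) - n) * (α * p) ≤ (p:ℝ)*((n:ℝ)-1) - (n:ℝ)*((n:ℝ)-1)/2 := by
    linarith only [hsumlow, hchainR, hsplit, hconst, hlowE, hDR]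
  have hs : (Real.sqrt (α^2+1))^2 = α^2+1 := Real.sq_sqrt (by positivity)
  have hs1 : 1 ≤ Real.sqrt (α^2+1) := by
    have h10 := Real.sqrt_le_sqrt (show (1:ℝ) ≤ α^2+1 by linarith only [sq_nonneg α])
    rwa [Real.sqrt_one] at h10
  have hfin := final_ineq α (Real.sqrt (α^2+1)) p n hα hs hs1 (by exact_mod_cast hp)
    (by exact_mod_cast hn1) (by exact_mod_cast hnp) hmain
  rw [hfinrank]
  exact hfin
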